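/- If f : I → ℝ is 3-convex (e.g., f ∈ C⁴ with f⁽⁴⁾ ≥ 0) then for all x, y ∈ I with x < y: (1/2) f(((3+√3)/6)x + ((3−√3)/6)y) + (1/2) f(((3−√3)/6)x + ((3+√3)/6)y) ≤ (1/(y-x)) ∫ₓʸ f(t) dt ≤ (1/6) f(x) + (2/3) f((x+y)/2) + (1/6) f(y). -/

import Mathlib

set_option maxHeartbeats 1000000
open Set intervalIntegral MeasureTheory Topology

lemma nonneg_aux (H : ℝ) (F F' : ℝ → ℝ) (hF0 : F 0 = 0)
    (hc : ContinuousOn F (Set.Icc 0 H))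
    (hd : ∀ h ∈ Set.Ioo 0 H, HasDerivAt F (F' h) h)
    (hp : ∀ h ∈ Set.Ioo 0 H, 0 ≤ F' h) :
    ∀ h ∈ Set.Icc 0 H, 0 ≤ F h := by
  intro h hh
  have hmono : MonotoneOn F (Set.Icc 0 H) := by
    apply monotoneOn_of_deriv_nonneg (convex_Icc 0 H) hc
    · intro t ht
      rw [interior_Icc] at ht
      exact (hd t ht).differentiableAt.differentiableWithinAt
    · intro t ht
      rw [interior_Icc] at ht
      rw [(hd t ht).deriv]
      exact hp t ht
  have h0 : (0:ℝ) ∈ Set.Icc 0 H := Set.left_mem_Icc.2 (hh.1.trans hh.2)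
  have := hmono h0 hh hh.1
  rw [hF0] at this
  exact this

lemma quad_core (x y : ℝ) (hxy : x < y) (f f1 f2 f3 : ℝ → ℝ)
    (hc0 : ContinuousOn f (Set.Icc x y)) (hc1 : ContinuousOn f1 (Set.Icc x y))
    (hc2 : ContinuousOn f2 (Set.Icc x y))
    (hd0 : ∀ t ∈ Set.Ioo x y, HasDerivAt f (f1 t) t)
    (hd1 : ∀ t ∈ Set.Ioo x y, HasDerivAt f1 (f2 t) t)
    (hd2 : ∀ t ∈ Set.Ioo x y, HasDerivAt f2 (f3 t) t)
    (hmono : MonotoneOn f3 (Set.Icc x y)) :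
    ((y - x)/2) * (f ((x+y)/2 + (-(Real.sqrt 3/3)) * ((y-x)/2)) +
        f ((x+y)/2 + (Real.sqrt 3/3) * ((y-x)/2))) ≤ (∫ t in x..y, f t) ∧
    (∫ t in x..y, f t) ≤ ((y-x)/6) * (f x + 4 * f ((x+y)/2) + f y) := by
  set c : ℝ := Real.sqrt 3 / 3 with hcdef
  set m := (x+y)/2 with hm
  set H := (y-x)/2 with hH
  have hHpos : 0 < H := by rw [hH]; linarith
  have hs3 : Real.sqrt 3 ^ 2 = 3 := Real.sq_sqrt (by norm_num)
  have hs3n : 0 ≤ Real.sqrt 3 := Real.sqrt_nonneg 3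
  have hcpos : 0 < c := by
    rw [hcdef]
    have : 0 < Real.sqrt 3 := Real.sqrt_pos.2 (by norm_num)
    linarith
  have hc1' : c ≤ 1 := by
    rw [hcdef]; nlinarith
  have hcsq : c ^ 2 = 1/3 := by rw [hcdef]; field_simp; nlinarith
  have hccube : c + c ^ 3 ≤ 1 := by
    rw [hcdef]
    have h94 : Real.sqrt 3 ≤ 9/4 := by nlinarith
    have : (Real.sqrt 3 / 3) ^ 3 = Real.sqrt 3 / 9 := by
      field_simp
      nlinarith
    rw [this]
    linarith
  have habsc : |c| ≤ 1 := by rw [abs_of_pos hcpos]; exact hc1'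
  have habsnc : |(-c)| ≤ 1 := by rw [abs_neg]; exact habsc
  have habs1 : |(1:ℝ)| ≤ 1 := by norm_num
  have habsn1 : |(-1:ℝ)| ≤ 1 := by norm_num
  -- membership lemmas
  have hmem : ∀ d : ℝ, |d| ≤ 1 → ∀ h ∈ Set.Icc (0:ℝ) H, m + d * h ∈ Set.Icc x y := by
    intro d hd h hh
    have h1 : |d * h| ≤ h := by
      rw [abs_mul, abs_of_nonneg hh.1]
      nlinarith [abs_nonneg d, hh.1]
    have h2 := abs_le.1 h1
    constructor
    · have : x = m - H := by rw [hm, hH]; ring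
      rw [this]; linarith [hh.2]
    · have : y = m + H := by rw [hm, hH]; ring
      rw [this]; linarith [hh.2]
  have himem : ∀ d : ℝ, |d| ≤ 1 → ∀ h ∈ Set.Ioo (0:ℝ) H, m + d * h ∈ Set.Ioo x y := by
    intro d hd h hh
    have h1 : |d * h| ≤ h := by
      rw [abs_mul, abs_of_nonneg hh.1.le]
      nlinarith [abs_nonneg d, hh.1.le]
    have h2 := abs_le.1 h1
    constructor
    · have : x = m - H := by rw [hm, hH]; ring
      rw [this]; linarith [hh.2]
    · have : y = m + H := by rw [hm, hH]; ring
      rw [this]; linarith [hh.2]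
  -- continuity transfer
  have kc : ∀ (φ : ℝ → ℝ), ContinuousOn φ (Set.Icc x y) → ∀ d : ℝ, |d| ≤ 1 →
      ContinuousOn (fun h => φ (m + d * h)) (Set.Icc 0 H) := by
    intro φ hφ d hd
    apply hφ.comp (Continuous.continuousOn (by continuity))
    intro h hh
    exact hmem d hd h hh
  -- derivative transfer
  have kd : ∀ (φ φ' : ℝ → ℝ), (∀ t ∈ Set.Ioo x y, HasDerivAt φ (φ' t) t) → ∀ d : ℝ, |d| ≤ 1 →
      ∀ h ∈ Set.Ioo (0:ℝ) H, HasDerivAt (fun u => φ (m + d * u)) (φ' (m + d * h) * d) h := by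
    intro φ φ' hφ d hd h hh
    have hinner : HasDerivAt (fun u : ℝ => m + d * u) d h := by
      simpa using ((hasDerivAt_id h).const_mul d).const_add m
    exact (hφ _ (himem d hd h hh)).comp h hinner
  -- the primitive
  have huIcc : Set.uIcc x y = Set.Icc x y := Set.uIcc_of_le hxy.le
  have hmmem : m ∈ Set.Icc x y := by
    constructor <;> [skip; skip] <;> (rw [hm]; linarith)
  have hint : IntervalIntegrable f volume x y := by
    apply ContinuousOn.intervalIntegrable
    rwa [huIcc]
  set Φ : ℝ → ℝ := fun u => ∫ t in m..u, f t with hΦdef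
  have hΦc : ContinuousOn Φ (Set.Icc x y) := by
    have := intervalIntegral.continuousOn_primitive_interval' hint (by rwa [huIcc])
    rwa [huIcc] at this
  have hΦd : ∀ u ∈ Set.Ioo x y, HasDerivAt Φ (f u) u := by
    intro u hu
    apply intervalIntegral.integral_hasDerivAt_right
    · apply ContinuousOn.intervalIntegrable
      apply hc0.mono
      rw [← huIcc]
      exact Set.uIcc_subset_uIcc (by rwa [huIcc]) (by rw [huIcc]; exact Set.Ioo_subset_Icc_self hu)
    · exact ContinuousOn.stronglyMeasurableAtFilter isOpen_Ioo (hc0.mono Set.Ioo_subset_Icc_self) u hu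
    · exact hc0.continuousAt (Icc_mem_nhds hu.1 hu.2)
  -- gradient inequality from MVT
  have grad : ∀ u v : ℝ, u ∈ Set.Icc x y → v ∈ Set.Icc x y → u ≤ v →
      (v - u) * f3 u ≤ f2 v - f2 u ∧ f2 v - f2 u ≤ (v - u) * f3 v := by
    intro u v hu hv huv
    rcases eq_or_lt_of_le huv with rfl | hlt
    · simp
    · obtain ⟨ξ, hξ, hξe⟩ := exists_hasDerivAt_eq_slope f2 f3 hlt
        (hc2.mono (Set.Icc_subset_Icc hu.1 hv.2))
        (fun t ht => hd2 t ⟨lt_of_le_of_lt hu.1 ht.1, lt_of_lt_of_le ht.2 hv.2⟩)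
      rw [eq_div_iff (by linarith : v - u ≠ 0)] at hξe
      have hξmem : ξ ∈ Set.Icc x y := ⟨hu.1.trans hξ.1.le, hξ.2.le.trans hv.2⟩
      have h1 : f3 u ≤ f3 ξ := hmono hu hξmem hξ.1.le
      have h2 : f3 ξ ≤ f3 v := hmono hξmem hv hξ.2.le
      have hpos : (0:ℝ) ≤ v - u := by linarith
      constructor
      · linarith [mul_le_mul_of_nonneg_left h1 hpos]
      · linarith [mul_le_mul_of_nonneg_left h2 hpos]
  -- ============ Simpson (upper bound) chain ============
  have hP : ∀ h ∈ Set.Icc (0:ℝ) H,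
      0 ≤ f1 (m + (-1) * h) - f1 (m + 1 * h) + h * (f2 (m + 1 * h) + f2 (m + (-1) * h)) := by
    apply nonneg_aux H _ (fun h => h * (f3 (m + 1 * h) - f3 (m + (-1) * h)))
    · norm_num
      try ring
    · exact ((kc f1 hc1 (-1) habsn1).sub (kc f1 hc1 1 habs1)).add
        (continuousOn_id.mul ((kc f2 hc2 1 habs1).add (kc f2 hc2 (-1) habsn1)))
    · intro h hh
      have d1 := kd f1 f2 hd1 1 habs1 h hh
      have d2 := kd f1 f2 hd1 (-1) habsn1 h hh
      have e1 := kd f2 f3 hd2 1 habs1 h hh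
      have e2 := kd f2 f3 hd2 (-1) habsn1 h hh
      have key : HasDerivAt
          (fun h => f1 (m + (-1) * h) - f1 (m + 1 * h) + h * (f2 (m + 1 * h) + f2 (m + (-1) * h)))
          (f2 (m + (-1) * h) * (-1) - f2 (m + 1 * h) * 1 +
            (1 * (f2 (m + 1 * h) + f2 (m + (-1) * h)) +
              h * (f3 (m + 1 * h) * 1 + f3 (m + (-1) * h) * (-1)))) h :=
        (d2.sub d1).add ((hasDerivAt_id h).mul (e1.add e2))
      have heq : f2 (m + (-1) * h) * (-1) - f2 (m + 1 * h) * 1 +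
            (1 * (f2 (m + 1 * h) + f2 (m + (-1) * h)) +
              h * (f3 (m + 1 * h) * 1 + f3 (m + (-1) * h) * (-1))) =
          h * (f3 (m + 1 * h) - f3 (m + (-1) * h)) := by ring
      exact heq ▸ key
    · intro h hh
      have hle : m + (-1) * h ≤ m + 1 * h := by linarith [hh.1.le]
      have := hmono (hmem (-1) habsn1 h (Set.Ioo_subset_Icc_self hh))
        (hmem 1 habs1 h (Set.Ioo_subset_Icc_self hh)) hle
      exact mul_nonneg hh.1.le (sub_nonneg.2 this)
  have hG : ∀ h ∈ Set.Icc (0:ℝ) H,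
      0 ≤ 4 * f m - 2 * f (m + (-1) * h) - 2 * f (m + 1 * h) +
        h * (f1 (m + 1 * h) - f1 (m + (-1) * h)) := by
    apply nonneg_aux H _
      (fun h => f1 (m + (-1) * h) - f1 (m + 1 * h) + h * (f2 (m + 1 * h) + f2 (m + (-1) * h)))
    · norm_num
      try ring
    · exact ((continuousOn_const.sub (continuousOn_const.mul (kc f hc0 (-1) habsn1))).sub
        (continuousOn_const.mul (kc f hc0 1 habs1))).add
        (continuousOn_id.mul ((kc f1 hc1 1 habs1).sub (kc f1 hc1 (-1) habsn1)))
    · intro h hh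
      have e1 := kd f f1 hd0 1 habs1 h hh
      have e2 := kd f f1 hd0 (-1) habsn1 h hh
      have d1 := kd f1 f2 hd1 1 habs1 h hh
      have d2 := kd f1 f2 hd1 (-1) habsn1 h hh
      have key : HasDerivAt
          (fun h => 4 * f m - 2 * f (m + (-1) * h) - 2 * f (m + 1 * h) +
            h * (f1 (m + 1 * h) - f1 (m + (-1) * h)))
          (0 - 2 * (f1 (m + (-1) * h) * (-1)) - 2 * (f1 (m + 1 * h) * 1) +
            (1 * (f1 (m + 1 * h) - f1 (m + (-1) * h)) +
              h * (f2 (m + 1 * h) * 1 - f2 (m + (-1) * h) * (-1)))) h :=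
        (((hasDerivAt_const h (4 * f m)).sub (e2.const_mul 2)).sub (e1.const_mul 2)).add
          ((hasDerivAt_id h).mul (d1.sub d2))
      have heq : 0 - 2 * (f1 (m + (-1) * h) * (-1)) - 2 * (f1 (m + 1 * h) * 1) +
            (1 * (f1 (m + 1 * h) - f1 (m + (-1) * h)) +
              h * (f2 (m + 1 * h) * 1 - f2 (m + (-1) * h) * (-1))) =
          f1 (m + (-1) * h) - f1 (m + 1 * h) + h * (f2 (m + 1 * h) + f2 (m + (-1) * h)) := by
        ring
      exact heq ▸ key
    · intro h hh
      exact hP h (Set.Ioo_subset_Icc_self hh)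
  have hA : ∀ h ∈ Set.Icc (0:ℝ) H,
      0 ≤ h / 3 * (f (m + (-1) * h) + 4 * f m + f (m + 1 * h)) -
        (Φ (m + 1 * h) - Φ (m + (-1) * h)) := by
    apply nonneg_aux H _
      (fun h => 1 / 3 * (4 * f m - 2 * f (m + (-1) * h) - 2 * f (m + 1 * h) +
        h * (f1 (m + 1 * h) - f1 (m + (-1) * h))))
    · norm_num
      try ring
    · exact ((continuousOn_id.div_const 3).mul (((kc f hc0 (-1) habsn1).add
        continuousOn_const).add (kc f hc0 1 habs1))).sub
        ((kc Φ hΦc 1 habs1).sub (kc Φ hΦc (-1) habsn1))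
    · intro h hh
      have e1 := kd f f1 hd0 1 habs1 h hh
      have e2 := kd f f1 hd0 (-1) habsn1 h hh
      have p1 := kd Φ f hΦd 1 habs1 h hh
      have p2 := kd Φ f hΦd (-1) habsn1 h hh
      have key : HasDerivAt
          (fun h => h / 3 * (f (m + (-1) * h) + 4 * f m + f (m + 1 * h)) -
            (Φ (m + 1 * h) - Φ (m + (-1) * h)))
          (1 / 3 * (f (m + (-1) * h) + 4 * f m + f (m + 1 * h)) +
            h / 3 * ((f1 (m + (-1) * h) * (-1) + 0) + f1 (m + 1 * h) * 1) -
            (f (m + 1 * h) * 1 - f (m + (-1) * h) * (-1))) h :=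
        (((hasDerivAt_id h).div_const 3).mul ((e2.add (hasDerivAt_const h (4 * f m))).add e1)).sub
          (p1.sub p2)
      have heq : 1 / 3 * (f (m + (-1) * h) + 4 * f m + f (m + 1 * h)) +
            h / 3 * ((f1 (m + (-1) * h) * (-1) + 0) + f1 (m + 1 * h) * 1) -
            (f (m + 1 * h) * 1 - f (m + (-1) * h) * (-1)) =
          1 / 3 * (4 * f m - 2 * f (m + (-1) * h) - 2 * f (m + 1 * h) +
            h * (f1 (m + 1 * h) - f1 (m + (-1) * h))) := by ring
      exact heq ▸ key
    · intro h hh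
      have := hG h (Set.Ioo_subset_Icc_self hh)
      linarith
  -- ============ Gauss (lower bound) chain ============
  have hS : ∀ h ∈ Set.Ioo (0:ℝ) H,
      0 ≤ f2 (m + 1 * h) + f2 (m + (-1) * h) - 3 * c ^ 2 * (f2 (m + c * h) + f2 (m + (-c) * h)) -
        c ^ 3 * (h * (f3 (m + c * h) - f3 (m + (-c) * h))) := by
    intro h hh
    have hhI := Set.Ioo_subset_Icc_self hh
    have m1 := hmem 1 habs1 h hhI
    have mn1 := hmem (-1) habsn1 h hhI
    have mc := hmem c habsc h hhI
    have mnc := hmem (-c) habsnc h hhI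
    have hch : c * h ≤ 1 * h := mul_le_mul_of_nonneg_right hc1' hh.1.le
    have hch0 : 0 ≤ c * h := mul_nonneg hcpos.le hh.1.le
    have e1 := (grad (m + c * h) (m + 1 * h) mc m1 (by linarith)).1
    have e2 := (grad (m + (-1) * h) (m + (-c) * h) mn1 mnc (by linarith)).2
    have e3 : f3 (m + (-c) * h) ≤ f3 (m + c * h) := hmono mnc mc (by linarith)
    have hbig : 0 ≤ (1 - c - c ^ 3) * h * (f3 (m + c * h) - f3 (m + (-c) * h)) :=
      mul_nonneg (mul_nonneg (by linarith) hh.1.le) (sub_nonneg.2 e3)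
    have h3c : 3 * c ^ 2 = 1 := by rw [hcsq]; ring
    rw [h3c]
    linarith [e1, e2, hbig]
  have hR : ∀ h ∈ Set.Icc (0:ℝ) H,
      0 ≤ f1 (m + 1 * h) - f1 (m + (-1) * h) - 2 * c * (f1 (m + c * h) - f1 (m + (-c) * h)) -
        c ^ 2 * (h * (f2 (m + c * h) + f2 (m + (-c) * h))) := by
    apply nonneg_aux H _
      (fun h => f2 (m + 1 * h) + f2 (m + (-1) * h) -
        3 * c ^ 2 * (f2 (m + c * h) + f2 (m + (-c) * h)) -
        c ^ 3 * (h * (f3 (m + c * h) - f3 (m + (-c) * h))))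
    · norm_num
    · exact (((kc f1 hc1 1 habs1).sub (kc f1 hc1 (-1) habsn1)).sub
        (continuousOn_const.mul ((kc f1 hc1 c habsc).sub (kc f1 hc1 (-c) habsnc)))).sub
        (continuousOn_const.mul (continuousOn_id.mul
          ((kc f2 hc2 c habsc).add (kc f2 hc2 (-c) habsnc))))
    · intro h hh
      have d1 := kd f1 f2 hd1 1 habs1 h hh
      have d2 := kd f1 f2 hd1 (-1) habsn1 h hh
      have dc := kd f1 f2 hd1 c habsc h hh
      have dnc := kd f1 f2 hd1 (-c) habsnc h hh
      have ec := kd f2 f3 hd2 c habsc h hh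
      have enc := kd f2 f3 hd2 (-c) habsnc h hh
      have key : HasDerivAt
          (fun h => f1 (m + 1 * h) - f1 (m + (-1) * h) -
            2 * c * (f1 (m + c * h) - f1 (m + (-c) * h)) -
            c ^ 2 * (h * (f2 (m + c * h) + f2 (m + (-c) * h))))
          (f2 (m + 1 * h) * 1 - f2 (m + (-1) * h) * (-1) -
            2 * c * (f2 (m + c * h) * c - f2 (m + (-c) * h) * (-c)) -
            c ^ 2 * (1 * (f2 (m + c * h) + f2 (m + (-c) * h)) +
              h * (f3 (m + c * h) * c + f3 (m + (-c) * h) * (-c)))) h :=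
        (((d1.sub d2).sub ((dc.sub dnc).const_mul (2 * c))).sub
          (((hasDerivAt_id h).mul (ec.add enc)).const_mul (c ^ 2)))
      have heq : f2 (m + 1 * h) * 1 - f2 (m + (-1) * h) * (-1) -
            2 * c * (f2 (m + c * h) * c - f2 (m + (-c) * h) * (-c)) -
            c ^ 2 * (1 * (f2 (m + c * h) + f2 (m + (-c) * h)) +
              h * (f3 (m + c * h) * c + f3 (m + (-c) * h) * (-c))) =
          f2 (m + 1 * h) + f2 (m + (-1) * h) -
            3 * c ^ 2 * (f2 (m + c * h) + f2 (m + (-c) * h)) -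
            c ^ 3 * (h * (f3 (m + c * h) - f3 (m + (-c) * h))) := by ring
      exact heq ▸ key
    · exact hS
  have hQ : ∀ h ∈ Set.Icc (0:ℝ) H,
      0 ≤ f (m + 1 * h) + f (m + (-1) * h) - f (m + c * h) - f (m + (-c) * h) -
        c * (h * (f1 (m + c * h) - f1 (m + (-c) * h))) := by
    apply nonneg_aux H _
      (fun h => f1 (m + 1 * h) - f1 (m + (-1) * h) -
        2 * c * (f1 (m + c * h) - f1 (m + (-c) * h)) -
        c ^ 2 * (h * (f2 (m + c * h) + f2 (m + (-c) * h))))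
    · norm_num
    · exact ((((kc f hc0 1 habs1).add (kc f hc0 (-1) habsn1)).sub
        (kc f hc0 c habsc)).sub (kc f hc0 (-c) habsnc)).sub
        (continuousOn_const.mul (continuousOn_id.mul
          ((kc f1 hc1 c habsc).sub (kc f1 hc1 (-c) habsnc))))
    · intro h hh
      have e1 := kd f f1 hd0 1 habs1 h hh
      have e2 := kd f f1 hd0 (-1) habsn1 h hh
      have ecf := kd f f1 hd0 c habsc h hh
      have encf := kd f f1 hd0 (-c) habsnc h hh
      have dc := kd f1 f2 hd1 c habsc h hh
      have dnc := kd f1 f2 hd1 (-c) habsnc h hh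
      have key : HasDerivAt
          (fun h => f (m + 1 * h) + f (m + (-1) * h) - f (m + c * h) - f (m + (-c) * h) -
            c * (h * (f1 (m + c * h) - f1 (m + (-c) * h))))
          (f1 (m + 1 * h) * 1 + f1 (m + (-1) * h) * (-1) - f1 (m + c * h) * c -
            f1 (m + (-c) * h) * (-c) -
            c * (1 * (f1 (m + c * h) - f1 (m + (-c) * h)) +
              h * (f2 (m + c * h) * c - f2 (m + (-c) * h) * (-c)))) h :=
        ((((e1.add e2).sub ecf).sub encf).sub
          (((hasDerivAt_id h).mul (dc.sub dnc)).const_mul c))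
      have heq : f1 (m + 1 * h) * 1 + f1 (m + (-1) * h) * (-1) - f1 (m + c * h) * c -
            f1 (m + (-c) * h) * (-c) -
            c * (1 * (f1 (m + c * h) - f1 (m + (-c) * h)) +
              h * (f2 (m + c * h) * c - f2 (m + (-c) * h) * (-c))) =
          f1 (m + 1 * h) - f1 (m + (-1) * h) -
            2 * c * (f1 (m + c * h) - f1 (m + (-c) * h)) -
            c ^ 2 * (h * (f2 (m + c * h) + f2 (m + (-c) * h))) := by ring
      exact heq ▸ key
    · intro h hh
      exact hR h (Set.Ioo_subset_Icc_self hh)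
  have hB : ∀ h ∈ Set.Icc (0:ℝ) H,
      0 ≤ (Φ (m + 1 * h) - Φ (m + (-1) * h)) - h * (f (m + (-c) * h) + f (m + c * h)) := by
    apply nonneg_aux H _
      (fun h => f (m + 1 * h) + f (m + (-1) * h) - f (m + c * h) - f (m + (-c) * h) -
        c * (h * (f1 (m + c * h) - f1 (m + (-c) * h))))
    · norm_num
    · exact ((kc Φ hΦc 1 habs1).sub (kc Φ hΦc (-1) habsn1)).sub
        (continuousOn_id.mul ((kc f hc0 (-c) habsnc).add (kc f hc0 c habsc)))
    · intro h hh
      have p1 := kd Φ f hΦd 1 habs1 h hh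
      have p2 := kd Φ f hΦd (-1) habsn1 h hh
      have ecf := kd f f1 hd0 c habsc h hh
      have encf := kd f f1 hd0 (-c) habsnc h hh
      have key : HasDerivAt
          (fun h => (Φ (m + 1 * h) - Φ (m + (-1) * h)) - h * (f (m + (-c) * h) + f (m + c * h)))
          ((f (m + 1 * h) * 1 - f (m + (-1) * h) * (-1)) -
            (1 * (f (m + (-c) * h) + f (m + c * h)) +
              h * (f1 (m + (-c) * h) * (-c) + f1 (m + c * h) * c))) h :=
        (p1.sub p2).sub ((hasDerivAt_id h).mul (encf.add ecf))
      have heq : (f (m + 1 * h) * 1 - f (m + (-1) * h) * (-1)) -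
            (1 * (f (m + (-c) * h) + f (m + c * h)) +
              h * (f1 (m + (-c) * h) * (-c) + f1 (m + c * h) * c)) =
          f (m + 1 * h) + f (m + (-1) * h) - f (m + c * h) - f (m + (-c) * h) -
            c * (h * (f1 (m + c * h) - f1 (m + (-c) * h))) := by ring
      exact heq ▸ key
    · intro h hh
      exact hQ h (Set.Ioo_subset_Icc_self hh)
  -- ============ conclusions ============
  have hyH : m + 1 * H = y := by rw [hm, hH]; ring
  have hxH : m + (-1) * H = x := by rw [hm, hH]; ring
  have hHmem : H ∈ Set.Icc (0:ℝ) H := Set.right_mem_Icc.2 hHpos.le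
  have i1 : IntervalIntegrable f volume x m := by
    apply ContinuousOn.intervalIntegrable
    apply hc0.mono
    rw [Set.uIcc_of_le hmmem.1]
    exact Set.Icc_subset_Icc le_rfl hmmem.2
  have i2 : IntervalIntegrable f volume m y := by
    apply ContinuousOn.intervalIntegrable
    apply hc0.mono
    rw [Set.uIcc_of_le hmmem.2]
    exact Set.Icc_subset_Icc hmmem.1 le_rfl
  have hadd := intervalIntegral.integral_add_adjacent_intervals i1 i2
  have hΦx : Φ x = -∫ t in x..m, f t := intervalIntegral.integral_symm x m
  have hΦy : Φ y = ∫ t in m..y, f t := rfl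
  have hsplit : Φ y - Φ x = ∫ t in x..y, f t := by
    rw [hΦx, hΦy]
    linarith [hadd]
  constructor
  · have hBH := hB H hHmem
    rw [hyH, hxH] at hBH
    rw [hsplit] at hBH
    linarith [hBH]
  · have hAH := hA H hHmem
    rw [hyH, hxH] at hAH
    rw [hsplit] at hAH
    have he : H / 3 * (f x + 4 * f m + f y) = (y - x) / 6 * (f x + 4 * f m + f y) := by
      rw [hH]; ring
    linarith [hAH]

theorem gauss2_lobatto3_three_convex (I : Set ℝ) (hI : Convex ℝ I) (f : ℝ → ℝ)
    (hf : ContDiffOn ℝ 4 f I)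
    (h4 : ∀ t ∈ I, 0 ≤ iteratedDerivWithin 4 f I t)
    (x y : ℝ) (hx : x ∈ I) (hy : y ∈ I) (hxy : x < y) :
    (1 / 2) * f (((3 + Real.sqrt 3) / 6) * x + ((3 - Real.sqrt 3) / 6) * y) +
      (1 / 2) * f (((3 - Real.sqrt 3) / 6) * x + ((3 + Real.sqrt 3) / 6) * y) ≤
      (1 / (y - x)) * (∫ t in x..y, f t) ∧
    (1 / (y - x)) * (∫ t in x..y, f t) ≤
      (1 / 6) * f x + (2 / 3) * f ((x + y) / 2) + (1 / 6) * f y := by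
  have hIcc : Set.Icc x y ⊆ I := hI.ordConnected.out hx hy
  have hIoo : Set.Ioo x y ⊆ interior I := by
    rw [← interior_Icc]
    exact interior_mono hIcc
  have hne : (interior I).Nonempty :=
    ⟨(x + y) / 2, hIoo ⟨by linarith, by linarith⟩⟩
  have hU : UniqueDiffOn ℝ I := uniqueDiffOn_convex hI hne
  have hd : ∀ k : ℕ, (k : WithTop ℕ∞) < 4 → ∀ t ∈ Set.Ioo x y,
      HasDerivAt (iteratedDerivWithin k f I) (iteratedDerivWithin (k + 1) f I t) t := by
    intro k hk t ht
    have htI : t ∈ I := hIcc (Set.Ioo_subset_Icc_self ht)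
    have hnh : I ∈ 𝓝 t := mem_interior_iff_mem_nhds.mp (hIoo ht)
    have hdiff : DifferentiableWithinAt ℝ (iteratedDerivWithin k f I) I t :=
      hf.differentiableOn_iteratedDerivWithin hk hU t htI
    have hda : DifferentiableAt ℝ (iteratedDerivWithin k f I) t :=
      hdiff.differentiableAt hnh
    have he : iteratedDerivWithin (k + 1) f I t = deriv (iteratedDerivWithin k f I) t := by
      rw [iteratedDerivWithin_succ, derivWithin_of_mem_nhds hnh]
    rw [he]
    exact hda.hasDerivAt
  have h0 : iteratedDerivWithin 0 f I = f := iteratedDerivWithin_zero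
  have hd0 : ∀ t ∈ Set.Ioo x y, HasDerivAt f (iteratedDerivWithin 1 f I t) t := by
    intro t ht
    have := hd 0 (by norm_num) t ht
    rwa [h0] at this
  have hc : ∀ k : ℕ, (k : WithTop ℕ∞) ≤ 4 →
      ContinuousOn (iteratedDerivWithin k f I) (Set.Icc x y) := by
    intro k hk
    exact (hf.continuousOn_iteratedDerivWithin hk hU).mono hIcc
  have hmono : MonotoneOn (iteratedDerivWithin 3 f I) (Set.Icc x y) := by
    apply monotoneOn_of_deriv_nonneg (convex_Icc x y) (hc 3 (by norm_num))
    · intro t ht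
      rw [interior_Icc] at ht
      exact (hd 3 (by norm_num) t ht).differentiableAt.differentiableWithinAt
    · intro t ht
      rw [interior_Icc] at ht
      rw [(hd 3 (by norm_num) t ht).deriv]
      exact h4 t (hIcc (Set.Ioo_subset_Icc_self ht))
  have hcore := quad_core x y hxy f (iteratedDerivWithin 1 f I) (iteratedDerivWithin 2 f I)
    (iteratedDerivWithin 3 f I) ((hf.continuousOn).mono hIcc) (hc 1 (by norm_num))
    (hc 2 (by norm_num)) hd0 (hd 1 (by norm_num)) (hd 2 (by norm_num)) hmono
  have n1 : ((3 + Real.sqrt 3) / 6) * x + ((3 - Real.sqrt 3) / 6) * y =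
      (x + y) / 2 + (-(Real.sqrt 3 / 3)) * ((y - x) / 2) := by ring
  have n2 : ((3 - Real.sqrt 3) / 6) * x + ((3 + Real.sqrt 3) / 6) * y =
      (x + y) / 2 + (Real.sqrt 3 / 3) * ((y - x) / 2) := by ring
  rw [n1, n2]
  have h2 : (0:ℝ) < y - x := by linarith
  have hJ : (1 / (y - x)) * (∫ t in x..y, f t) = (∫ t in x..y, f t) / (y - x) := by ring
  constructor
  · rw [hJ, le_div_iff₀ h2]
    have := hcore.1
    nlinarith [this]
  · rw [hJ, div_le_iff₀ h2]
    have := hcore.2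
    nlinarith [this]
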